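/- arXiv:2312.10369 — 2 statements merged into one kernel-verified Lean document; each statement's English description precedes it below -/
import Mathlib

section
/- Let (X,d) be a metric space, let S ⊆ X be a finite nonempty set, let c, r ∈ X, let ρ ≥ 0, α > 1 and D ≥ 0 be reals. Suppose there exists a point v₀ ∈ X with d(v₀,c) ≤ D and d(v₀,r) ≤ ρ·d(v₀,c), and suppose the set P = {v ∈ S : d(v,c) < D} satisfies |P| ≤ |S|/α. Then Σ_{v∈S} d(v,r) ≤ (1 + (1+ρ)·α/(α−1)) · Σ_{v∈S} d(v,c). -/
/-- Let `(X,d)` be a metric space, `S ⊆ X` finite and nonempty, `c, r ∈ X`, and reals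
`ρ ≥ 0`, `α > 1`, `D ≥ 0`. If some `v₀ ∈ X` satisfies `d(v₀,c) ≤ D` and
`d(v₀,r) ≤ ρ·d(v₀,c)`, and the set `P = {v ∈ S : d(v,c) < D}` satisfies `|P| ≤ |S|/α`,
then `∑_{v∈S} d(v,r) ≤ (1 + (1+ρ)·α/(α−1)) · ∑_{v∈S} d(v,c)`. -/
theorem sum_dist_bound {X : Type*} [MetricSpace X] [DecidableEq X]
    (S : Finset X) (hS : S.Nonempty) (c r : X) (ρ α D : ℝ)
    (hρ : 0 ≤ ρ) (hα : 1 < α) (hD : 0 ≤ D)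
    (v₀ : X) (hv₀c : dist v₀ c ≤ D) (hv₀r : dist v₀ r ≤ ρ * dist v₀ c)
    (hP : ((S.filter fun v => dist v c < D).card : ℝ) ≤ (S.card : ℝ) / α) :
    ∑ v ∈ S, dist v r ≤ (1 + (1 + ρ) * α / (α - 1)) * ∑ v ∈ S, dist v c := by
  set T := ∑ v ∈ S, dist v c with hT
  have hT0 : 0 ≤ T := Finset.sum_nonneg fun v _ => dist_nonneg
  -- points outside P have dist ≥ D
  have hsplit : ((S.filter fun v => ¬ dist v c < D).card : ℝ) * D ≤ T := by
    calc ((S.filter fun v => ¬ dist v c < D).card : ℝ) * D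
        = ∑ _v ∈ S.filter (fun v => ¬ dist v c < D), D := by
          rw [Finset.sum_const, nsmul_eq_mul]
      _ ≤ ∑ v ∈ S.filter (fun v => ¬ dist v c < D), dist v c :=
          Finset.sum_le_sum fun v hv => le_of_not_gt (Finset.mem_filter.mp hv).2
      _ ≤ T := Finset.sum_le_sum_of_subset_of_nonneg (Finset.filter_subset _ _)
          (fun v _ _ => dist_nonneg)
  have hcard : ((S.filter fun v => ¬ dist v c < D).card : ℝ)
      = (S.card : ℝ) - ((S.filter fun v => dist v c < D).card : ℝ) := by
    have := Finset.card_filter_add_card_filter_not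
      (s := S) (p := fun v => dist v c < D)
    push_cast [← this]
    ring
  have hα0 : (0:ℝ) < α := lt_trans one_pos hα
  have hα1 : (0:ℝ) < α - 1 := by linarith
  have hkey : (S.card : ℝ) * D ≤ α / (α - 1) * T := by
    have h1 : (S.card : ℝ) - (S.card : ℝ) / α
        ≤ ((S.filter fun v => ¬ dist v c < D).card : ℝ) := by
      rw [hcard]; linarith
    have h2 : ((S.card : ℝ) - (S.card : ℝ) / α) * D ≤ T := by
      calc ((S.card : ℝ) - (S.card : ℝ) / α) * D
          ≤ ((S.filter fun v => ¬ dist v c < D).card : ℝ) * D :=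
            mul_le_mul_of_nonneg_right h1 hD
        _ ≤ T := hsplit
    rw [div_mul_eq_mul_div, le_div_iff₀ hα1]
    have : ((S.card : ℝ) - (S.card : ℝ) / α) * D * α = (S.card : ℝ) * D * (α - 1) := by
      field_simp
    nlinarith [h2, hT0]
  have hptwise : ∀ v ∈ S, dist v r ≤ dist v c + (1 + ρ) * D := by
    intro v _
    have h1 : dist v r ≤ dist v c + dist c v₀ + dist v₀ r := dist_triangle4 v c v₀ r
    have h2 : dist c v₀ ≤ D := by rw [dist_comm]; exact hv₀c
    have h3 : dist v₀ r ≤ ρ * D := le_trans hv₀r (mul_le_mul_of_nonneg_left hv₀c hρ)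
    nlinarith
  calc ∑ v ∈ S, dist v r ≤ ∑ v ∈ S, (dist v c + (1 + ρ) * D) :=
        Finset.sum_le_sum hptwise
    _ = T + (S.card : ℝ) * ((1 + ρ) * D) := by
        rw [Finset.sum_add_distrib, Finset.sum_const, nsmul_eq_mul]
    _ ≤ T + (1 + ρ) * (α / (α - 1) * T) := by
        have := mul_le_mul_of_nonneg_left hkey (by linarith : (0:ℝ) ≤ 1 + ρ)
        nlinarith
    _ = (1 + (1 + ρ) * α / (α - 1)) * T := by field_simp
end

section
/- Let R = {c, c'} be the committee output by the EAR run with committee size k = 2 (so p = ⌈n/2⌉), and suppose n ≥ 2 is even (so α := n/p = 2). Then min_{r ∈ R} Σ_{v ∈ V} d(v,r) ≤ (8 + √41) · min_{c* ∈ C} Σ_{v ∈ V} d(v,c*), i.e., at least one of the two committee members has single-winner metric distortion at most γ(2) = 8 + √41 ≈ 14.4. -/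
open scoped Classical

/-- An election in a metric space: a finite set `V` of voters, a finite set `C` of
candidates, and for each voter a strict ranking of the candidates (position `1` is most
preferred, positions range over `{1, …, |C|}`) that is consistent with the metric. -/
structure Election (X : Type*) [MetricSpace X] where
  V : Finset X
  C : Finset X
  rank : X → X → ℕ
  rank_bijOn : ∀ v ∈ V, Set.BijOn (rank v) ↑C (Set.Icc 1 C.card)
  rank_metric : ∀ v ∈ V, ∀ c ∈ C, ∀ c' ∈ C, dist v c < dist v c' → rank v c < rank v c'

/-- The state of Algorithm 1 (EAR): the uncovered voters `U`, the list `R` of candidates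
selected so far (in order of selection), and the neighborhoods `N`. -/
structure EARState (X : Type*) where
  U : Finset X
  R : List X
  N : X → Finset X

variable {X : Type*} [MetricSpace X]

/-- The `τ`-th ranked candidate of voter `v`. -/
noncomputable def tauCand (E : Election X) (v : X) (τ : ℕ) : X :=
  if h : ∃ c ∈ E.C, E.rank v c = τ then h.choose else v

/-- One step of Algorithm 1: processing voter `v` at tolerance `τ`, with threshold `p`. -/
noncomputable def voterStep (E : Election X) (p τ : ℕ) (st : EARState X) (v : X) :
    EARState X :=
  if v ∈ st.U then
    let c := tauCand E v τ
    if c ∈ st.R then st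
    else
      let Nc := insert v (st.N c)
      if Nc.card = p then
        { U := st.U \ Nc
          R := st.R ++ [c]
          N := fun c' => if c' = c then Nc else if c' ∈ st.R then st.N c' else st.N c' \ Nc }
      else
        { st with N := fun c' => if c' = c then Nc else st.N c' }
  else st

/-- The state at termination of the main loop of Algorithm 1 (EAR) with threshold `p`,
where `orders τ` is the (arbitrary) order in which the voters are processed in the
iteration with tolerance `τ`. -/
noncomputable def EARrun (E : Election X) (p : ℕ) (orders : ℕ → List X) : EARState X :=
  (List.range E.C.card).foldl
    (fun st i => (orders (i + 1)).foldl (voterStep E p (i + 1)) st)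
    ⟨E.V, [], fun _ => ∅⟩

/-- Each round processes every voter exactly once, in an arbitrary order. -/
def ValidOrders (E : Election X) (orders : ℕ → List X) : Prop :=
  ∀ τ, (orders τ).Nodup ∧ (orders τ).toFinset = E.V

/-- `p = ⌈n / k⌉`. -/
def earP (E : Election X) (k : ℕ) : ℕ := (E.V.card + k - 1) / k

/-- `R[S]`: the selected candidates whose neighborhood (at termination) meets `S`. -/
noncomputable def reps (st : EARState X) (S : Finset X) : Finset X :=
  st.R.toFinset.filter fun r => (st.N r ∩ S).Nonempty

/-- `d_sum(S, x) = ∑_{v ∈ S} d(v, x)`. -/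
noncomputable def dsum (S : Finset X) (x : X) : ℝ := ∑ v ∈ S, dist v x

/-- `d_sum(S, C') = ∑_{v ∈ S} min_{c ∈ C'} d(v, c)`. -/
noncomputable def dsumSet (S : Finset X) (C' : Finset X) : ℝ :=
  ∑ v ∈ S, ⨅ c : C', dist v (c : X)

/-! ### Auxiliary lemmas -/

lemma ear_rank_one_le (E : Election X) {v c : X} (hv : v ∈ E.V) (hc : c ∈ E.C) :
    1 ≤ E.rank v c := ((E.rank_bijOn v hv).mapsTo hc).1

lemma ear_rank_le_card (E : Election X) {v c : X} (hv : v ∈ E.V) (hc : c ∈ E.C) :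
    E.rank v c ≤ E.C.card := ((E.rank_bijOn v hv).mapsTo hc).2

lemma ear_exists_rank_eq (E : Election X) {v : X} (hv : v ∈ E.V) {τ : ℕ}
    (h1 : 1 ≤ τ) (h2 : τ ≤ E.C.card) : ∃ c ∈ E.C, E.rank v c = τ := by
  obtain ⟨c, hc, hce⟩ := (E.rank_bijOn v hv).surjOn (Set.mem_Icc.mpr ⟨h1, h2⟩)
  exact ⟨c, hc, hce⟩

lemma ear_tauCand_spec (E : Election X) {v : X} (hv : v ∈ E.V) {τ : ℕ}
    (h1 : 1 ≤ τ) (h2 : τ ≤ E.C.card) :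
    tauCand E v τ ∈ E.C ∧ E.rank v (tauCand E v τ) = τ := by
  have hex : ∃ c ∈ E.C, E.rank v c = τ := ear_exists_rank_eq E hv h1 h2
  rw [tauCand, dif_pos hex]
  exact ⟨hex.choose_spec.1, hex.choose_spec.2⟩

/-- Invariant before the first selection, during round `τ`, with `S` the set of voters
not yet processed in round `τ`. -/
def MidP (E : Election X) (p τ : ℕ) (S : Finset X) (st : EARState X) : Prop :=
  st.R = [] ∧ st.U = E.V ∧ ∀ c ∈ E.C,
    (st.N c).card < p ∧ (∀ v ∈ st.N c, v ∈ E.V ∧ E.rank v c ≤ τ) ∧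
    (∀ v ∈ E.V, (E.rank v c < τ ∨ (E.rank v c = τ ∧ v ∉ S)) → v ∈ st.N c)

/-- Pure facts recorded at the moment of the first selection. -/
def DoneP (E : Election X) (p : ℕ) (st : EARState X) : Prop :=
  ∃ c₁ τ₁ V₁, c₁ ∈ st.R ∧ c₁ ∈ E.C ∧ 1 ≤ τ₁ ∧ V₁ ⊆ E.V ∧ V₁.card = p ∧
    (∀ v ∈ V₁, E.rank v c₁ ≤ τ₁) ∧
    ∀ c ∈ E.C, c ≠ c₁ → (E.V.filter fun v => E.rank v c < τ₁).card < p

lemma ear_done_step (E : Election X) (p τ : ℕ) (st : EARState X) (v : X)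
    (h : DoneP E p st) : DoneP E p (voterStep E p τ st v) := by
  obtain ⟨c₁, τ₁, V₁, hmem, hrest⟩ := h
  refine ⟨c₁, τ₁, V₁, ?_, hrest⟩
  simp only [voterStep]
  split_ifs <;> simp [hmem]

lemma ear_done_foldl (E : Election X) (p τ : ℕ) (l : List X) (st : EARState X)
    (h : DoneP E p st) : DoneP E p (l.foldl (voterStep E p τ) st) := by
  induction l generalizing st with
  | nil => exact h
  | cons a t ih => exact ih _ (ear_done_step E p τ st a h)

lemma ear_step_lemma (E : Election X) (p τ : ℕ) (hτ1 : 1 ≤ τ) (hτm : τ ≤ E.C.card)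
    {S : Finset X} {st : EARState X} {v : X} (hv : v ∈ E.V)
    (hmid : MidP E p τ S st) :
    MidP E p τ (S.erase v) (voterStep E p τ st v) ∨
      DoneP E p (voterStep E p τ st v) := by
  obtain ⟨hR, hU, hN⟩ := hmid
  have hvU : v ∈ st.U := by rw [hU]; exact hv
  obtain ⟨hcC, hcr⟩ := ear_tauCand_spec E hv hτ1 hτm
  have hcR : tauCand E v τ ∉ st.R := by rw [hR]; simp
  simp only [voterStep]
  rw [if_pos hvU, if_neg hcR]
  by_cases hNc : (insert v (st.N (tauCand E v τ))).card = p
  · rw [if_pos hNc]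
    right
    refine ⟨tauCand E v τ, τ, insert v (st.N (tauCand E v τ)), by simp, hcC, hτ1, ?_, hNc,
      ?_, ?_⟩
    · intro w hw
      rcases Finset.mem_insert.mp hw with rfl | hw'
      · exact hv
      · exact ((hN _ hcC).2.1 w hw').1
    · intro w hw
      rcases Finset.mem_insert.mp hw with rfl | hw'
      · omega
      · exact ((hN _ hcC).2.1 w hw').2
    · intro c' hc' hne
      have hsub : E.V.filter (fun w => E.rank w c' < τ) ⊆ st.N c' := by
        intro w hw
        rw [Finset.mem_filter] at hw
        exact (hN c' hc').2.2 w hw.1 (Or.inl hw.2)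
      exact lt_of_le_of_lt (Finset.card_le_card hsub) (hN c' hc').1
  · rw [if_neg hNc]
    left
    refine ⟨hR, hU, ?_⟩
    intro c' hc'
    by_cases hcc : c' = tauCand E v τ
    · subst hcc
      simp only [if_pos rfl, if_true]
      refine ⟨?_, ?_, ?_⟩
      · have h1 := (hN _ hcC).1
        have h2 := Finset.card_insert_le v (st.N (tauCand E v τ))
        omega
      · intro w hw
        rcases Finset.mem_insert.mp hw with rfl | hw'
        · exact ⟨hv, by omega⟩
        · exact (hN _ hcC).2.1 w hw'
      · intro w hwV hcond
        by_cases hwv : w = v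
        · subst hwv; exact Finset.mem_insert_self _ _
        · apply Finset.mem_insert_of_mem
          apply (hN _ hcC).2.2 w hwV
          rcases hcond with h1 | ⟨h1, h2⟩
          · exact Or.inl h1
          · exact Or.inr ⟨h1, fun hmem => h2 (Finset.mem_erase.mpr ⟨hwv, hmem⟩)⟩
    · simp only [if_neg hcc]
      refine ⟨(hN c' hc').1, (hN c' hc').2.1, ?_⟩
      intro w hwV hcond
      apply (hN c' hc').2.2 w hwV
      by_cases hwv : w = v
      · subst hwv
        rcases hcond with h1 | ⟨h1, _⟩
        · exact Or.inl h1
        · exfalso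
          apply hcc
          have := (E.rank_bijOn w hv).injOn hc' hcC (by rw [h1, hcr])
          exact this.symm ▸ rfl
      · rcases hcond with h1 | ⟨h1, h2⟩
        · exact Or.inl h1
        · exact Or.inr ⟨h1, fun hmem => h2 (Finset.mem_erase.mpr ⟨hwv, hmem⟩)⟩

lemma ear_round_lemma (E : Election X) (p τ : ℕ) (hτ1 : 1 ≤ τ) (hτm : τ ≤ E.C.card) :
    ∀ (l : List X), l.Nodup → (∀ x ∈ l, x ∈ E.V) → ∀ st, MidP E p τ l.toFinset st →
      MidP E p τ ∅ (l.foldl (voterStep E p τ) st) ∨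
        DoneP E p (l.foldl (voterStep E p τ) st) := by
  intro l
  induction l with
  | nil =>
    intro _ _ st h
    left
    simpa using h
  | cons a t ih =>
    intro hnd hmem st h
    have ha : a ∈ E.V := hmem a (by simp)
    have hnd' := List.nodup_cons.mp hnd
    have hS : ((a :: t).toFinset : Finset X).erase a = t.toFinset := by
      rw [List.toFinset_cons]
      exact Finset.erase_insert (fun hc => hnd'.1 (List.mem_toFinset.mp hc))
    rcases ear_step_lemma E p τ hτ1 hτm ha h with hm | hd
    · rw [List.foldl_cons]
      rw [hS] at hm
      exact ih hnd'.2 (fun x hx => hmem x (List.mem_cons_of_mem _ hx)) _ hm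
    · right
      rw [List.foldl_cons]
      exact ear_done_foldl E p τ t _ hd

lemma ear_mid_succ (E : Election X) (p τ : ℕ) (st : EARState X)
    (h : MidP E p τ ∅ st) : MidP E p (τ + 1) E.V st := by
  obtain ⟨hR, hU, hN⟩ := h
  refine ⟨hR, hU, fun c hc => ⟨(hN c hc).1, ?_, ?_⟩⟩
  · intro w hw
    exact ⟨((hN c hc).2.1 w hw).1, le_trans ((hN c hc).2.1 w hw).2 (by omega)⟩
  · intro w hwV hcond
    apply (hN c hc).2.2 w hwV
    rcases hcond with h1 | ⟨h1, h2⟩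
    · by_cases hlt : E.rank w c < τ
      · exact Or.inl hlt
      · exact Or.inr ⟨by omega, Finset.notMem_empty w⟩
    · exact absurd hwV h2

lemma ear_run_lemma (E : Election X) (p : ℕ) (hp : 1 ≤ p) (orders : ℕ → List X)
    (ho : ValidOrders E orders) :
    ∀ mm, mm ≤ E.C.card →
      MidP E p (mm + 1) E.V
        ((List.range mm).foldl
          (fun st i => (orders (i + 1)).foldl (voterStep E p (i + 1)) st)
          ⟨E.V, [], fun _ => ∅⟩) ∨
      DoneP E p
        ((List.range mm).foldl
          (fun st i => (orders (i + 1)).foldl (voterStep E p (i + 1)) st)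
          ⟨E.V, [], fun _ => ∅⟩) := by
  intro mm
  induction mm with
  | zero =>
    intro _
    left
    refine ⟨rfl, rfl, fun c hc => ⟨by simp; omega, by simp, ?_⟩⟩
    intro w hw hcond
    exfalso
    have h1 := ear_rank_one_le E hw hc
    rcases hcond with h2 | ⟨_, h2⟩
    · omega
    · exact h2 hw
  | succ k ih =>
    intro hk
    rw [List.range_succ, List.foldl_append, List.foldl_cons, List.foldl_nil]
    rcases ih (by omega) with hm | hd
    · have horder := ho (k + 1)
      have hmem : ∀ x ∈ orders (k + 1), x ∈ E.V := by
        intro x hx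
        rw [← horder.2]
        exact List.mem_toFinset.mpr hx
      have hm' : MidP E p (k + 1) (orders (k + 1)).toFinset
          ((List.range k).foldl
            (fun st i => (orders (i + 1)).foldl (voterStep E p (i + 1)) st)
            ⟨E.V, [], fun _ => ∅⟩) := by
        rw [horder.2]; exact hm
      rcases ear_round_lemma E p (k + 1) (by omega) hk (orders (k + 1)) horder.1 hmem _ hm'
        with h1 | h2
      · left; exact ear_mid_succ E p (k + 1) _ h1
      · right; exact h2
    · right
      exact ear_done_foldl E p (k + 1) (orders (k + 1)) _ hd

lemma ear_final_done (E : Election X) (p : ℕ) (hp : 1 ≤ p) (hn : E.V.card = 2 * p)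
    (hC : E.C.Nonempty) (orders : ℕ → List X) (ho : ValidOrders E orders) :
    DoneP E p (EARrun E p orders) := by
  unfold EARrun
  rcases ear_run_lemma E p hp orders ho E.C.card le_rfl with hm | hd
  · exfalso
    obtain ⟨c, hc⟩ := hC
    obtain ⟨_, _, hN⟩ := hm
    have hsub : E.V ⊆ ((List.range E.C.card).foldl
        (fun st i => (orders (i + 1)).foldl (voterStep E p (i + 1)) st)
        ⟨E.V, [], fun _ => ∅⟩).N c := by
      intro w hw
      exact (hN c hc).2.2 w hw (Or.inl (by have := ear_rank_le_card E hw hc; omega))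
    have h1 := Finset.card_le_card hsub
    have h2 := (hN c hc).1
    omega
  · exact hd

lemma ear_pred_card (E : Election X) {w cstar : X} (hw : w ∈ E.V) (hc : cstar ∈ E.C) :
    (E.C.filter fun c => E.rank w c < E.rank w cstar).card = E.rank w cstar - 1 := by
  have hbij := E.rank_bijOn w hw
  rw [show E.rank w cstar - 1 = (Finset.Icc 1 (E.rank w cstar - 1)).card by
    rw [Nat.card_Icc]; omega]
  apply Finset.card_bij (fun c _ => E.rank w c)
  · intro a ha
    rw [Finset.mem_filter] at ha
    have h1 := ear_rank_one_le E hw ha.1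
    rw [Finset.mem_Icc]
    exact ⟨h1, by omega⟩
  · intro a ha b hb hab
    rw [Finset.mem_filter] at ha hb
    exact hbij.injOn ha.1 hb.1 hab
  · intro t ht
    rw [Finset.mem_Icc] at ht
    have hr1 := ear_rank_one_le E hw hc
    have hrm := ear_rank_le_card E hw hc
    obtain ⟨a, haC, hat⟩ := ear_exists_rank_eq E hw ht.1 (by omega)
    exact ⟨a, Finset.mem_filter.mpr ⟨haC, by omega⟩, hat⟩

lemma ear_dist_le_of_rank_le (E : Election X) {v c c' : X} (hv : v ∈ E.V) (hc : c ∈ E.C)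
    (hc' : c' ∈ E.C) (h : E.rank v c ≤ E.rank v c') : dist v c ≤ dist v c' := by
  by_contra hgt
  push_neg at hgt
  have := E.rank_metric v hv c' hc' c hc hgt
  omega

/-- The key metric bound: the first selected candidate has distortion at most 9. -/
lemma ear_key_bound (E : Election X) {p τ₁ : ℕ} {c₁ cstar : X} {V₁ : Finset X}
    (hp : 1 ≤ p) (hn : E.V.card = 2 * p)
    (hc₁C : c₁ ∈ E.C) (hcsC : cstar ∈ E.C) (hcne : cstar ≠ c₁)
    (hV₁ : V₁ ⊆ E.V) (hV₁c : V₁.card = p) (hτ₁ : 1 ≤ τ₁)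
    (hrank : ∀ v ∈ V₁, E.rank v c₁ ≤ τ₁)
    (hK1 : ∀ c ∈ E.C, c ≠ c₁ → (E.V.filter fun v => E.rank v c < τ₁).card < p) :
    ∑ v ∈ E.V, dist v c₁ ≤ 9 * ∑ v ∈ E.V, dist v cstar := by
  set Xs := ∑ v ∈ E.V, dist v cstar with hXs
  have hX0 : 0 ≤ Xs := Finset.sum_nonneg fun v _ => dist_nonneg
  have hS1 : ∑ v ∈ V₁, dist v cstar ≤ Xs :=
    Finset.sum_le_sum_of_subset_of_nonneg hV₁ fun v _ _ => dist_nonneg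
  set D := dist c₁ cstar with hD
  have hD0 : 0 ≤ D := dist_nonneg
  have hmain : (p : ℝ) * D ≤ 4 * Xs := by
    rcases (V₁.filter fun v => 2 * dist v cstar < D).eq_empty_or_nonempty with hG | hGne
    · -- all voters of V₁ are far from cstar
      have hall : ∀ v ∈ V₁, D / 2 ≤ dist v cstar := by
        intro v hvv
        by_contra hlt
        push_neg at hlt
        have : v ∈ V₁.filter fun v => 2 * dist v cstar < D :=
          Finset.mem_filter.mpr ⟨hvv, by linarith⟩
        rw [hG] at this
        exact absurd this (Finset.notMem_empty v)
      have h1 := Finset.card_nsmul_le_sum V₁ _ _ hall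
      rw [hV₁c, nsmul_eq_mul] at h1
      have h2 : ∑ v ∈ V₁, dist v cstar ≤ Xs := hS1
      nlinarith
    · obtain ⟨v₀, hv₀G, hmin⟩ := Finset.exists_min_image _ (fun v => dist v cstar) hGne
      rw [Finset.mem_filter] at hv₀G
      obtain ⟨hv₀V₁, hx₀⟩ := hv₀G
      have hv₀V : v₀ ∈ E.V := hV₁ hv₀V₁
      set x₀ := dist v₀ cstar with hx₀def
      -- all voters of V₁ are at distance at least x₀
      have ha : ∀ v ∈ V₁, x₀ ≤ dist v cstar := by
        intro v hvv
        by_cases hvG : v ∈ V₁.filter fun v => 2 * dist v cstar < D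
        · exact hmin v hvG
        · rw [Finset.mem_filter] at hvG
          push_neg at hvG
          have := hvG hvv
          linarith
      have hpx₀ : (p : ℝ) * x₀ ≤ Xs := by
        have h1 := Finset.card_nsmul_le_sum V₁ _ _ ha
        rw [hV₁c, nsmul_eq_mul] at h1
        linarith
      -- the congestion argument: few voters are very close to cstar
      have hNV : (E.V.filter fun w => 2 * dist w cstar < D - 2 * x₀).card < p := by
        refine lt_of_le_of_lt (Finset.card_le_card ?_) (hK1 cstar hcsC hcne)
        intro w hw
        rw [Finset.mem_filter] at hw ⊢
        obtain ⟨hwV, hwx⟩ := hw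
        refine ⟨hwV, ?_⟩
        have hpredcard := ear_pred_card E hwV hcsC
        have hr1 := ear_rank_one_le E hwV hcsC
        have hv₀c₁ : dist v₀ c₁ ≥ D - x₀ := by
          have := dist_triangle c₁ v₀ cstar
          have h2 : dist c₁ v₀ = dist v₀ c₁ := dist_comm _ _
          linarith
        have hKsub : insert cstar (E.C.filter fun c => E.rank w c < E.rank w cstar)
            ⊆ E.C.filter fun c => E.rank v₀ c < E.rank v₀ c₁ := by
          intro a ha'
          rcases Finset.mem_insert.mp ha' with rfl | haP
          · refine Finset.mem_filter.mpr ⟨hcsC, ?_⟩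
            apply E.rank_metric v₀ hv₀V _ hcsC _ hc₁C
            linarith
          · rw [Finset.mem_filter] at haP
            obtain ⟨haC, har⟩ := haP
            have hdwa : dist w a ≤ dist w cstar :=
              ear_dist_le_of_rank_le E hwV haC hcsC (by omega)
            refine Finset.mem_filter.mpr ⟨haC, ?_⟩
            apply E.rank_metric v₀ hv₀V _ haC _ hc₁C
            have t1 : dist cstar a ≤ dist cstar w + dist w a := dist_triangle _ _ _
            have t2 : dist v₀ a ≤ x₀ + dist cstar a := by
              calc dist v₀ a ≤ dist v₀ cstar + dist cstar a := dist_triangle _ _ _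
                _ = x₀ + dist cstar a := by rw [hx₀def]
            have hcw : dist cstar w = dist w cstar := dist_comm _ _
            linarith
        have hK₀card : (E.C.filter fun c => E.rank v₀ c < E.rank v₀ c₁).card ≤ τ₁ - 1 := by
          have h1 : (E.C.filter fun c => E.rank v₀ c < E.rank v₀ c₁).card
              ≤ (Finset.Icc 1 (τ₁ - 1)).card := by
            apply Finset.card_le_card_of_injOn (E.rank v₀)
            · intro a ha'
              rw [Finset.mem_coe, Finset.mem_filter] at ha'
              rw [Finset.mem_coe, Finset.mem_Icc]
              have h2 := ear_rank_one_le E hv₀V ha'.1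
              have h3 := hrank v₀ hv₀V₁
              exact ⟨h2, by omega⟩
            · exact Set.InjOn.mono
                (fun a haa => (Finset.mem_filter.mp haa).1)
                (E.rank_bijOn v₀ hv₀V).injOn
          rw [Nat.card_Icc] at h1
          omega
        have hins : (insert cstar (E.C.filter fun c => E.rank w c < E.rank w cstar)).card
            = E.rank w cstar := by
          rw [Finset.card_insert_of_notMem (by simp [Finset.mem_filter])]
          omega
        have hle := Finset.card_le_card hKsub
        omega
      -- at least p voters are at distance ≥ (D - 2x₀)/2 from cstar
      have hcards := Finset.card_filter_add_card_filter_not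
        (s := E.V) (p := fun w => 2 * dist w cstar < D - 2 * x₀)
      have hMcard : p ≤ (E.V.filter fun w => ¬ (2 * dist w cstar < D - 2 * x₀)).card := by
        omega
      have hMsum : (p : ℝ) * ((D - 2 * x₀) / 2) ≤ Xs := by
        have hlower : ∀ w ∈ E.V.filter (fun w => ¬ (2 * dist w cstar < D - 2 * x₀)),
            (D - 2 * x₀) / 2 ≤ dist w cstar := by
          intro w hw
          rw [Finset.mem_filter] at hw
          have h2 := hw.2
          push_neg at h2
          linarith
        have h1 := Finset.card_nsmul_le_sum _ _ _ hlower
        rw [nsmul_eq_mul] at h1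
        have h2 : ∑ w ∈ E.V.filter (fun w => ¬ (2 * dist w cstar < D - 2 * x₀)),
            dist w cstar ≤ Xs :=
          Finset.sum_le_sum_of_subset_of_nonneg (Finset.filter_subset _ _)
            fun _ _ _ => dist_nonneg
        have h3 : (p : ℝ) * ((D - 2 * x₀) / 2)
            ≤ ((E.V.filter fun w => ¬ (2 * dist w cstar < D - 2 * x₀)).card : ℝ)
              * ((D - 2 * x₀) / 2) := by
          apply mul_le_mul_of_nonneg_right _ (by linarith)
          exact_mod_cast hMcard
        linarith
      have hexp : (p : ℝ) * ((D - 2 * x₀) / 2)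
          = ((p : ℝ) * D - 2 * ((p : ℝ) * x₀)) / 2 := by ring
      rw [hexp] at hMsum
      linarith
  -- conclude
  have htri : ∑ v ∈ E.V, dist v c₁ ≤ ∑ v ∈ E.V, (dist v cstar + D) := by
    apply Finset.sum_le_sum
    intro v _
    calc dist v c₁ ≤ dist v cstar + dist cstar c₁ := dist_triangle _ _ _
      _ = dist v cstar + D := by rw [hD, dist_comm cstar c₁]
  rw [Finset.sum_add_distrib, Finset.sum_const, hn, nsmul_eq_mul] at htri
  have hcast : ((2 * p : ℕ) : ℝ) = 2 * (p : ℝ) := by push_cast; ring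
  rw [hcast] at htri
  nlinarith

/-- Let `R = {c, c'}` be the committee output by the EAR run with committee size `k = 2`
(so `p = ⌈n/2⌉`), and assume `n ≥ 2` is even. Then
`min_{r ∈ R} ∑_{v∈V} d(v,r) ≤ (8 + √41) · min_{c* ∈ C} ∑_{v∈V} d(v,c*)`, i.e., at
least one of the two committee members has single-winner metric distortion at most
`γ(2) = 8 + √41 ≈ 14.4`. -/
theorem ear_two_committee_distortion {X : Type*} [MetricSpace X] (E : Election X)
    (orders : ℕ → List X) (ho : ValidOrders E orders)
    (Rfin : Finset X) (hsub : (EARrun E (earP E 2) orders).R.toFinset ⊆ Rfin)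
    (hRC : Rfin ⊆ E.C) (hRcard : Rfin.card = 2)
    (hn2 : 2 ≤ E.V.card) (hneven : Even E.V.card) :
    ∃ r ∈ Rfin, ∀ c ∈ E.C,
      ∑ v ∈ E.V, dist v r ≤ (8 + Real.sqrt 41) * ∑ v ∈ E.V, dist v c := by
  have hsqrt : (1 : ℝ) ≤ Real.sqrt 41 := by
    nlinarith [Real.sq_sqrt (show (0:ℝ) ≤ 41 by norm_num), Real.sqrt_nonneg 41]
  -- basic facts
  have hCne : E.C.Nonempty := by
    rcases Finset.card_pos.mp (by omega : 0 < Rfin.card) with ⟨r, hr⟩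
    exact ⟨r, hRC hr⟩
  obtain ⟨t, ht⟩ := hneven
  set p := earP E 2 with hpdef
  have hpval : E.V.card = 2 * p := by
    have : p = (E.V.card + 2 - 1) / 2 := by rw [hpdef, earP]
    omega
  have hp1 : 1 ≤ p := by omega
  -- the minimizer cstar
  obtain ⟨cstar, hcsC, hcsmin⟩ :=
    Finset.exists_min_image E.C (fun c => ∑ v ∈ E.V, dist v c) hCne
  by_cases hcs : cstar ∈ Rfin
  · refine ⟨cstar, hcs, fun c hc => ?_⟩
    have h1 := hcsmin c hc
    have h2 : 0 ≤ ∑ v ∈ E.V, dist v c := Finset.sum_nonneg fun v _ => dist_nonneg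
    nlinarith
  · -- use the first selected candidate
    obtain ⟨c₁, τ₁, V₁, hc₁R, hc₁C, hτ₁, hV₁, hV₁c, hrank, hK1⟩ :=
      ear_final_done E p hp1 hpval hCne orders ho
    have hc₁Rfin : c₁ ∈ Rfin := hsub (List.mem_toFinset.mpr hc₁R)
    have hcne : cstar ≠ c₁ := fun h => hcs (h ▸ hc₁Rfin)
    have hkey := ear_key_bound E hp1 hpval hc₁C hcsC hcne hV₁ hV₁c hτ₁ hrank hK1
    refine ⟨c₁, hc₁Rfin, fun c hc => ?_⟩
    have h1 := hcsmin c hc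
    have h2 : 0 ≤ ∑ v ∈ E.V, dist v c := Finset.sum_nonneg fun v _ => dist_nonneg
    have h3 : 0 ≤ ∑ v ∈ E.V, dist v cstar := Finset.sum_nonneg fun v _ => dist_nonneg
    nlinarith
end
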